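/- Let P(u,v) be a non-degenerate 2×n transportation polytope and let k be the number of critical edges of P(u,v). Then the graph diameter of P(u,v) is at most min{n, n + 1 − k}. -/

import Mathlib

open scoped Classical

/-- The m×n transportation polytope with margins u, v. -/
def TP (m n : ℕ) (u : Fin m → ℝ) (v : Fin n → ℝ) : Set (Matrix (Fin m) (Fin n) ℝ) :=
  {y | (∀ i j, 0 ≤ y i j) ∧ (∀ i, ∑ j, y i j = u i) ∧ (∀ j, ∑ i, y i j = v j)}

/-- The support of a matrix: the set of positions with positive entry. -/
noncomputable def suppF (m n : ℕ) (y : Matrix (Fin m) (Fin n) ℝ) : Finset (Fin m × Fin n) :=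
  Finset.univ.filter (fun p => 0 < y p.1 p.2)

/-- Non-degeneracy: every vertex has exactly m + n − 1 positive entries. -/
def NonDeg (m n : ℕ) (u : Fin m → ℝ) (v : Fin n → ℝ) : Prop :=
  ∀ y ∈ Set.extremePoints ℝ (TP m n u v), (suppF m n y).card = m + n - 1

/-- The number of critical edges: pairs (i,j) with y i j > 0 for every y in P. -/
noncomputable def criticalCount (m n : ℕ) (u : Fin m → ℝ) (v : Fin n → ℝ) : ℕ :=
  (Finset.univ.filter
    (fun p : Fin m × Fin n => ∀ y ∈ TP m n u v, 0 < y p.1 p.2)).card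

/-- Two distinct vertices are adjacent if the segment between them is extreme in P. -/
def AdjVert (m n : ℕ) (u : Fin m → ℝ) (v : Fin n → ℝ)
    (y z : Matrix (Fin m) (Fin n) ℝ) : Prop :=
  y ≠ z ∧ y ∈ Set.extremePoints ℝ (TP m n u v) ∧ z ∈ Set.extremePoints ℝ (TP m n u v) ∧
    IsExtreme ℝ (TP m n u v) (segment ℝ y z)

namespace S11
variable {n : ℕ} {u : Fin 2 → ℝ} {v : Fin n → ℝ}
variable {y z a b F : Matrix (Fin 2) (Fin n) ℝ}

lemma fin2_eq_or (i r : Fin 2) : i = r ∨ i = 1 - r := by revert i r; decide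
lemma fin2_onesub_ne (r : Fin 2) : 1 - r ≠ r := by revert r; decide
lemma fin2_onesub_onesub (r : Fin 2) : 1 - (1 - r) = r := by revert r; decide
lemma fin2_cases (r : Fin 2) : r = 0 ∨ r = 1 := by revert r; decide

variable {y a b : Matrix (Fin 2) (Fin n) ℝ}

lemma TP_colsum (hy : y ∈ TP 2 n u v) (j : Fin n) : y 0 j + y 1 j = v j := by
  have := hy.2.2 j; rwa [Fin.sum_univ_two] at this

lemma TP_colsum' (hy : y ∈ TP 2 n u v) (r : Fin 2) (j : Fin n) :
    y r j + y (1 - r) j = v j := by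
  rcases fin2_cases r with h | h <;> subst h
  · simpa using TP_colsum hy j
  · have := TP_colsum hy j; simpa [add_comm] using this

lemma TP_le_v (hy : y ∈ TP 2 n u v) (r : Fin 2) (j : Fin n) : y r j ≤ v j := by
  have h := TP_colsum' hy r j
  have := hy.1 (1 - r) j
  linarith

/-- counting the support columnwise -/
lemma supp_card_eq (y : Matrix (Fin 2) (Fin n) ℝ) :
    (suppF 2 n y).card
      = ∑ j, ((if 0 < y 0 j then 1 else 0) + (if 0 < y 1 j then 1 else 0)) := by
  classical
  rw [suppF, Finset.card_filter, Fintype.sum_prod_type, Fin.sum_univ_two]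
  rw [← Finset.sum_add_distrib]

lemma supp_card_all_extreme (hv : ∀ j, 0 < v j) (hy : y ∈ TP 2 n u v)
    (h : ∀ j, y 0 j = 0 ∨ y 1 j = 0) : (suppF 2 n y).card = n := by
  rw [supp_card_eq]
  have : ∀ j, ((if 0 < y 0 j then 1 else 0) + (if 0 < y 1 j then 1 else 0)) = 1 := by
    intro j
    have hc := TP_colsum hy j
    rcases h j with h0 | h0 <;> rw [h0] <;>
      simp_all [show (0:ℝ) < v j from hv j] <;> linarith [hv j]
  simp [this]

/-- a TP-point with exactly n+1 positive entries has a unique split column -/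
lemma split_of_card (hv : ∀ j, 0 < v j) (hy : y ∈ TP 2 n u v)
    (hcard : (suppF 2 n y).card = n + 1) :
    ∃ s : Fin n, (0 < y 0 s ∧ 0 < y 1 s) ∧ ∀ j ≠ s, y 0 j = 0 ∨ y 1 j = 0 := by
  classical
  set T : Finset (Fin n) := Finset.univ.filter (fun j => 0 < y 0 j ∧ 0 < y 1 j) with hT
  have key : ∀ j, ((if 0 < y 0 j then 1 else 0) + (if 0 < y 1 j then 1 else 0))
      = 1 + (if j ∈ T then 1 else 0) := by
    intro j
    have hc := TP_colsum hy j
    have h0 := hy.1 0 j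
    have h1 := hy.1 1 j
    by_cases hp : 0 < y 0 j ∧ 0 < y 1 j
    · simp [hT, hp.1, hp.2]
    · have hj : ¬ (j ∈ T) := by simp [hT, *]
      rcases lt_or_eq_of_le h0 with hlt | heq
      · have : ¬ (0 < y 1 j) := fun hy1 => hp ⟨hlt, hy1⟩
        simp [hlt, this, hj]
      · have hlt1 : 0 < y 1 j := by rw [← heq] at hc; linarith [hv j]
        simp [← heq, hlt1, hj]
  rw [supp_card_eq] at hcard
  simp only [key, Finset.sum_add_distrib, Finset.sum_const, Finset.card_univ,
    Fintype.card_fin, smul_eq_mul, mul_one] at hcard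
  have hTcard : T.card = 1 := by
    have : ∑ j, (if j ∈ T then (1:ℕ) else 0) = T.card := by
      rw [Finset.sum_ite_mem, Finset.univ_inter, Finset.card_eq_sum_ones]
    omega
  obtain ⟨s, hs⟩ := Finset.card_eq_one.mp hTcard
  refine ⟨s, ?_, ?_⟩
  · have : s ∈ T := by rw [hs]; exact Finset.mem_singleton_self s
    simpa [hT] using this
  · intro j hj
    have : j ∉ T := by rw [hs]; simpa using hj
    simp only [hT, Finset.mem_filter, Finset.mem_univ, true_and] at this
    have h0 := hy.1 0 j
    have h1 := hy.1 1 j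
    rcases not_and_or.mp this with h | h
    · left; linarith [lt_or_eq_of_le h0]; 
    · right; linarith [lt_or_eq_of_le h1]


lemma TP_unique (ha : a ∈ TP 2 n u v) (hb : b ∈ TP 2 n u v) (s : Fin n)
    (h : ∀ j, j ≠ s → a 0 j = b 0 j) : a = b := by
  have hs : a 0 s = b 0 s := by
    have ha0 := ha.2.1 0
    have hb0 := hb.2.1 0
    have hae : a 0 s + ∑ j ∈ Finset.univ.erase s, a 0 j = ∑ j, a 0 j :=
      Finset.add_sum_erase _ _ (Finset.mem_univ s)
    have hbe : b 0 s + ∑ j ∈ Finset.univ.erase s, b 0 j = ∑ j, b 0 j :=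
      Finset.add_sum_erase _ _ (Finset.mem_univ s)
    have he : ∑ j ∈ Finset.univ.erase s, a 0 j = ∑ j ∈ Finset.univ.erase s, b 0 j :=
      Finset.sum_congr rfl (fun j hj => h j (Finset.ne_of_mem_erase hj))
    rw [ha0] at hae; rw [hb0] at hbe; linarith
  have h0 : ∀ j, a 0 j = b 0 j := by
    intro j; by_cases hj : j = s
    · rw [hj]; exact hs
    · exact h j hj
  ext i j
  rcases fin2_cases i with hi | hi <;> subst hi
  · exact h0 j
  · have := TP_colsum ha j
    have := TP_colsum hb j
    have := h0 j
    linarith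

lemma TP_convex : Convex ℝ (TP 2 n u v) := by
  rintro a ha b hb t1 t2 ht1 ht2 hts
  refine ⟨fun i j => ?_, fun i => ?_, fun j => ?_⟩
  · have : (t1 • a + t2 • b) i j = t1 * a i j + t2 * b i j := by
      simp [Matrix.add_apply, Matrix.smul_apply, smul_eq_mul]
    rw [this]
    have := ha.1 i j; have := hb.1 i j
    nlinarith
  · have : ∀ j, (t1 • a + t2 • b) i j = t1 * a i j + t2 * b i j := by
      intro j; simp [Matrix.add_apply, Matrix.smul_apply, smul_eq_mul]
    simp only [this, Finset.sum_add_distrib, ← Finset.mul_sum, ha.2.1 i, hb.2.1 i]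
    linear_combination (u i) * hts
  · have : ∀ i, (t1 • a + t2 • b) i j = t1 * a i j + t2 * b i j := by
      intro i; simp [Matrix.add_apply, Matrix.smul_apply, smul_eq_mul]
    simp only [this, Finset.sum_add_distrib, ← Finset.mul_sum, ha.2.2 j, hb.2.2 j]
    linear_combination (v j) * hts

lemma vert_extreme (hy : y ∈ TP 2 n u v) (s : Fin n)
    (hext : ∀ j, j ≠ s → y 0 j = 0 ∨ y 1 j = 0) :
    y ∈ Set.extremePoints ℝ (TP 2 n u v) := by
  refine ⟨hy, fun a ha b hb hseg => ?_⟩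
  obtain ⟨t1, t2, ht1, ht2, hts, hyy⟩ := hseg
  have entry : ∀ i j, t1 * a i j + t2 * b i j = y i j := by
    intro i j; rw [← hyy]; simp [Matrix.add_apply, Matrix.smul_apply, smul_eq_mul]
  have hab : ∀ j, j ≠ s → a 0 j = b 0 j := by
    intro j hj
    have a0 := ha.1 0 j; have b0 := hb.1 0 j
    have a1 := ha.1 1 j; have b1 := hb.1 1 j
    rcases hext j hj with h0 | h0
    · have e := entry 0 j
      rw [h0] at e
      have : a 0 j = 0 := by nlinarith
      have : b 0 j = 0 := by nlinarith
      linarith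
    · have e := entry 1 j
      rw [h0] at e
      have e1 : a 1 j = 0 := by nlinarith
      have e2 : b 1 j = 0 := by nlinarith
      have := TP_colsum ha j
      have := TP_colsum hb j
      linarith
  have hab2 : a = b := TP_unique ha hb s hab
  subst hab2
  have hy' : a = y := by
    have : t1 • a + t2 • a = (t1 + t2) • a := (add_smul t1 t2 a).symm
    rw [this, hts, one_smul] at hyy
    exact hyy
  exact hy'
lemma row_or {w : Matrix (Fin 2) (Fin n) ℝ} {j : Fin n} (r : Fin 2) (h : w r j = 0) :
    w 0 j = 0 ∨ w 1 j = 0 := by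
  rcases fin2_cases r with h' | h' <;> subst h'
  · exact Or.inl h
  · exact Or.inr h

set_option maxHeartbeats 1000000 in
lemma pivot (hv : ∀ j, 0 < v j)
    (hy : y ∈ TP 2 n u v) (s c : Fin n) (r : Fin 2) (hcs : c ≠ s)
    (hs0 : 0 < y 0 s) (hs1 : 0 < y 1 s)
    (hext : ∀ j, j ≠ s → y 0 j = 0 ∨ y 1 j = 0)
    (hfull : y r c = v c) :
    ∃ z ∈ TP 2 n u v,
      AdjVert 2 n u v y z ∧
      (∀ i j, j ≠ c → j ≠ s → z i j = y i j) ∧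
      z r c = v c - min (v c) (y (1-r) s) ∧
      z (1-r) c = min (v c) (y (1-r) s) ∧
      z r s = y r s + min (v c) (y (1-r) s) ∧
      z (1-r) s = y (1-r) s - min (v c) (y (1-r) s) ∧
      ((min (v c) (y (1-r) s) = v c ∧ ∀ j, j ≠ s → z 0 j = 0 ∨ z 1 j = 0) ∨
       (min (v c) (y (1-r) s) = y (1-r) s ∧ ∀ j, j ≠ c → z 0 j = 0 ∨ z 1 j = 0)) := by
  have hr' : (1:Fin 2) - r ≠ r := fin2_onesub_ne r
  set r' : Fin 2 := 1 - r with hr'def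
  -- basic facts
  have hcol := fun j => TP_colsum' hy r j
  have hzero : y r' c = 0 := by have := hcol c; rw [hfull] at this; linarith
  have hsr : 0 < y r s := by rcases fin2_cases r with h | h <;> subst h <;> assumption
  have hsr' : 0 < y r' s := by
    rcases fin2_cases r with h | h <;> subst h <;> simp [hr'def] <;> assumption
  set t : ℝ := min (v c) (y r' s) with htdef
  have ht0 : 0 < t := lt_min (hv c) hsr'
  have htvc : t ≤ v c := min_le_left _ _
  have htys : t ≤ y r' s := min_le_right _ _
  set xx : Fin 2 → ℝ := fun i => if i = r then (-1 : ℝ) else 1 with hxxdef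
  have hxxr : xx r = -1 := by simp [hxxdef]
  have hxxr' : xx r' = 1 := by simp [hxxdef, hr']
  have hxxsum : xx 0 + xx 1 = 0 := by
    rcases fin2_cases r with h | h <;> simp [hxxdef, h] <;> norm_num
  have hirow : ∀ i : Fin 2, i = r ∨ i = r' := fun i => fin2_eq_or i r
  set d : Matrix (Fin 2) (Fin n) ℝ :=
    Matrix.of (fun i j => (if j = c then xx i else 0) + (if j = s then -xx i else 0)) with hddef
  set z : Matrix (Fin 2) (Fin n) ℝ := y + t • d with hzdef
  have hze : ∀ i j, z i j = y i j + t * ((if j = c then xx i else 0) + (if j = s then -xx i else 0)) := by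
    intro i j
    simp [hzdef, hddef, Matrix.add_apply, Matrix.smul_apply, smul_eq_mul]
  have hzoff : ∀ i j, j ≠ c → j ≠ s → z i j = y i j := by
    intro i j h1 h2; rw [hze]; simp [h1, h2]
  have hzrc : z r c = v c - t := by rw [hze]; simp [hcs, hxxr, hfull]; ring
  have hzr'c : z r' c = t := by rw [hze]; simp [hcs, hxxr', hzero]
  have hzrs : z r s = y r s + t := by rw [hze]; simp [Ne.symm hcs, hxxr]
  have hzr's : z r' s = y r' s - t := by rw [hze]; simp [Ne.symm hcs, hxxr']; ring
  -- z entrywise in both row cases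
  have hzentry : ∀ i j, z i j = y i j ∨ (j = c ∨ j = s) := by
    intro i j
    by_cases h1 : j = c
    · right; left; exact h1
    · by_cases h2 : j = s
      · right; right; exact h2
      · left; exact hzoff i j h1 h2
  -- z ∈ TP
  have hzTP : z ∈ TP 2 n u v := by
    refine ⟨?_, ?_, ?_⟩
    · intro i j
      by_cases h1 : j = c
      · subst h1
        rcases hirow i with hi | hi <;> subst hi
        · rw [hzrc]; linarith
        · rw [hzr'c]; linarith
      · by_cases h2 : j = s
        · subst h2
          rcases hirow i with hi | hi <;> subst hi
          · rw [hzrs]; linarith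
          · rw [hzr's]; linarith
        · rw [hzoff i j h1 h2]; exact hy.1 i j
    · intro i
      have : ∀ j, z i j = y i j + t * ((if j = c then xx i else 0) + (if j = s then -xx i else 0)) := hze i
      simp only [this, Finset.sum_add_distrib, ← Finset.mul_sum]
      rw [Finset.sum_ite_eq' Finset.univ c (fun _ => xx i),
        Finset.sum_ite_eq' Finset.univ s (fun _ => -xx i)]
      simp [hy.2.1 i]
    · intro j
      rw [Fin.sum_univ_two, hze 0 j, hze 1 j]
      have := TP_colsum hy j
      by_cases h1 : j = c
      · subst h1; simp [hcs]; linear_combination this + t * hxxsum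
      · by_cases h2 : j = s
        · subst h2; simp [Ne.symm hcs, h1]; linear_combination this - t * hxxsum
        · simp [h1, h2]; linarith
  have hyne : y ≠ z := by
    intro h
    have := hzr'c
    rw [← h, hzero] at this
    linarith
  -- the face E
  set E : Set (Matrix (Fin 2) (Fin n) ℝ) :=
    {w | w ∈ TP 2 n u v ∧ ∀ j, j ≠ c → j ≠ s → w 0 j = y 0 j} with hEdef
  have hoffrow : ∀ (w : Matrix (Fin 2) (Fin n) ℝ), w ∈ TP 2 n u v →
      (∀ j, j ≠ c → j ≠ s → w 0 j = y 0 j) → ∀ i j, j ≠ c → j ≠ s → w i j = y i j := by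
    intro w hw hw0 i j h1 h2
    rcases fin2_cases i with hi | hi <;> subst hi
    · exact hw0 j h1 h2
    · have := TP_colsum hw j
      have := TP_colsum hy j
      have := hw0 j h1 h2
      linarith
  have hEseg : E = segment ℝ y z := by
    apply Set.eq_of_subset_of_subset
    · -- E ⊆ segment
      rintro w ⟨hw, hw0⟩
      set τ : ℝ := w r' c with hτdef
      have hτ0 : 0 ≤ τ := hw.1 r' c
      have hwrc : w r c = v c - τ := by
        have := TP_colsum' hw r c; rw [← hr'def] at this; linarith [hfull]
      have hτvc : τ ≤ v c := by have := hw.1 r c; linarith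
      -- row r sums
      have hwrs : w r s = y r s + τ := by
        have hsum : ∑ j, (w r j - y r j) = 0 := by
          rw [Finset.sum_sub_distrib, hw.2.1 r, hy.2.1 r, sub_self]
        have hmem_c : c ∈ Finset.univ.erase s := Finset.mem_erase.mpr ⟨hcs, Finset.mem_univ c⟩
        have e1 := Finset.add_sum_erase Finset.univ (fun j => w r j - y r j) (Finset.mem_univ s)
        have e2 := Finset.add_sum_erase (Finset.univ.erase s) (fun j => w r j - y r j) hmem_c
        have e3 : ∑ j ∈ (Finset.univ.erase s).erase c, (w r j - y r j) = 0 := by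
          apply Finset.sum_eq_zero
          intro j hj
          have hj1 : j ≠ c := Finset.ne_of_mem_erase hj
          have hj2 : j ≠ s := Finset.ne_of_mem_erase (Finset.mem_of_mem_erase hj)
          rw [hoffrow w hw hw0 r j hj1 hj2]; ring
        simp only [e3, add_zero] at e2
        rw [hsum] at e1
        rw [← e2, hwrc, hfull] at e1
        linarith [show w r s - y r s + (v c - τ - v c) = 0 from e1]
      have hwr's : w r' s = y r' s - τ := by
        have h1 := TP_colsum' hw r s; rw [← hr'def] at h1
        have h2 := TP_colsum' hy r s; rw [← hr'def] at h2
        linarith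
      have hτys : τ ≤ y r' s := by have := hw.1 r' s; linarith
      have hτt : τ ≤ t := le_min hτvc hτys
      have htne : t ≠ 0 := ne_of_gt ht0
      refine ⟨1 - τ / t, τ / t, by rw [sub_nonneg]; exact (div_le_one ht0).mpr hτt, by positivity, by ring, ?_⟩
      have hwent : ∀ i j, w i j
          = y i j + τ * ((if j = c then xx i else 0) + (if j = s then -xx i else 0)) := by
        intro i j
        by_cases h1 : j = c
        · subst h1
          rcases hirow i with hi | hi <;> subst hi
          · rw [hwrc, hfull]; simp [hcs, hxxr]; try ring
          · simp only [if_pos rfl, if_neg hcs, hxxr', add_zero, mul_one]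
            rw [hzero, hτdef]; simp
        · by_cases h2 : j = s
          · subst h2
            rcases hirow i with hi | hi <;> subst hi
            · rw [hwrs]; simp [Ne.symm hcs, hxxr]; try ring
            · rw [hwr's]; simp [Ne.symm hcs, hxxr']; try ring
          · rw [hoffrow w hw hw0 i j h1 h2]; simp [h1, h2]
      ext i j
      have hzij := hze i j
      have hwij := hwent i j
      have : ((1 - τ / t) • y + (τ / t) • z) i j = (1 - τ / t) * y i j + (τ / t) * z i j := by
        simp [Matrix.add_apply, Matrix.smul_apply, smul_eq_mul]
      rw [this, hzij, hwij]
      field_simp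
      ring
    · -- segment ⊆ E
      rintro w ⟨a1, a2, ha1, ha2, hsum, rfl⟩
      refine ⟨TP_convex hy hzTP ha1 ha2 hsum, ?_⟩
      intro j h1 h2
      have : (a1 • y + a2 • z) 0 j = a1 * y 0 j + a2 * z 0 j := by
        simp [Matrix.add_apply, Matrix.smul_apply, smul_eq_mul]
      rw [this, hzoff 0 j h1 h2]
      linear_combination (y 0 j) * hsum
  -- IsExtreme
  have hEext : IsExtreme ℝ (TP 2 n u v) E := by
    constructor
    · exact fun w hw => hw.1
    · rintro x1 hx1 x2 hx2 w hw ⟨t1, t2, ht1, ht2, hts, hww⟩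
      have entry : ∀ i j, t1 * x1 i j + t2 * x2 i j = w i j := by
        intro i j; rw [← hww]; simp [Matrix.add_apply, Matrix.smul_apply, smul_eq_mul]
      have key : ∀ j, j ≠ c → j ≠ s → x1 0 j = y 0 j ∧ x2 0 j = y 0 j := by
        intro j h1 h2
        have hw0 := hw.2 j h1 h2
        have a0 := hx1.1 0 j; have b0 := hx2.1 0 j
        have a1 := hx1.1 1 j; have b1 := hx2.1 1 j
        rcases hext j h2 with h0 | h0
        · have e := entry 0 j
          rw [hw0, h0] at e
          constructor
          · rw [h0]; nlinarith
          · rw [h0]; nlinarith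
        · have e := entry 1 j
          have hw1 : w 1 j = 0 := by
            have := TP_colsum hw.1 j
            have := TP_colsum hy j
            linarith
          rw [hw1] at e
          have e1 : x1 1 j = 0 := by nlinarith
          have e2 : x2 1 j = 0 := by nlinarith
          have c1 := TP_colsum hx1 j
          have c2 := TP_colsum hx2 j
          have cy := TP_colsum hy j
          constructor <;> linarith
      exact ⟨hx1, fun j h1 h2 => (key j h1 h2).1⟩
  -- extremality of y and z
  have hyV : y ∈ Set.extremePoints ℝ (TP 2 n u v) := vert_extreme hy s hext
  have hcases : t = v c ∨ t = y r' s := by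
    rcases le_total (v c) (y r' s) with h | h
    · left; exact min_eq_left h
    · right; exact min_eq_right h
  have hzStruct : (t = v c ∧ ∀ j, j ≠ s → z 0 j = 0 ∨ z 1 j = 0) ∨
      (t = y r' s ∧ ∀ j, j ≠ c → z 0 j = 0 ∨ z 1 j = 0) := by
    rcases hcases with h | h
    · left
      refine ⟨h, fun j h2 => ?_⟩
      by_cases h1 : j = c
      · subst h1
        exact row_or r (by rw [hzrc, h]; ring)
      · rcases hext j h2 with h0 | h0
        · exact Or.inl (by rw [hzoff 0 j h1 h2]; exact h0)
        · exact Or.inr (by rw [hzoff 1 j h1 h2]; exact h0)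
    · right
      refine ⟨h, fun j h1 => ?_⟩
      by_cases h2 : j = s
      · subst h2
        exact row_or r' (by rw [hzr's, h]; ring)
      · rcases hext j h2 with h0 | h0
        · exact Or.inl (by rw [hzoff 0 j h1 h2]; exact h0)
        · exact Or.inr (by rw [hzoff 1 j h1 h2]; exact h0)
  have hzV : z ∈ Set.extremePoints ℝ (TP 2 n u v) := by
    rcases hzStruct with ⟨_, hst⟩ | ⟨_, hst⟩
    · exact vert_extreme hzTP s hst
    · exact vert_extreme hzTP c hst
  exact ⟨z, hzTP, ⟨hyne, hyV, hzV, hEseg ▸ hEext⟩, hzoff, hzrc, hzr'c, hzrs, hzr's, hzStruct⟩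

def VertS (u : Fin 2 → ℝ) (v : Fin n → ℝ) (y : Matrix (Fin 2) (Fin n) ℝ) (s : Fin n) : Prop :=
  y ∈ TP 2 n u v ∧ (0 < y 0 s ∧ 0 < y 1 s) ∧ ∀ j, j ≠ s → y 0 j = 0 ∨ y 1 j = 0

lemma no_all_extreme (hn : 0 < n) (hv : ∀ j, 0 < v j) (hnd : NonDeg 2 n u v)
    (hz : z ∈ TP 2 n u v) (h : ∀ j, z 0 j = 0 ∨ z 1 j = 0) : False := by
  have hext := vert_extreme hz ⟨0, hn⟩ (fun j _ => h j)
  have h2 := hnd z hext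
  rw [supp_card_all_extreme hv hz h] at h2
  omega

lemma vert_of_extreme (hn : 0 < n) (hv : ∀ j, 0 < v j) (hnd : NonDeg 2 n u v)
    (hy : y ∈ Set.extremePoints ℝ (TP 2 n u v)) : ∃ s, VertS u v y s := by
  have h2 := hnd y hy
  have : (suppF 2 n y).card = n + 1 := by omega
  obtain ⟨s, hs, hext⟩ := split_of_card hv hy.1 this
  exact ⟨s, hy.1, hs, fun j hj => hext j hj⟩

lemma row_eq_of_row0 (hy : y ∈ TP 2 n u v) (hF : F ∈ TP 2 n u v) (j : Fin n) (r : Fin 2)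
    (h : y 0 j = F 0 j) : y r j = F r j := by
  rcases fin2_cases r with h' | h' <;> subst h'
  · exact h
  · have := TP_colsum hy j; have := TP_colsum hF j; linarith

lemma row0_eq_of_row (hy : y ∈ TP 2 n u v) (hF : F ∈ TP 2 n u v) (j : Fin n) (r : Fin 2)
    (h : y r j = F r j) : y 0 j = F 0 j := by
  rcases fin2_cases r with h' | h' <;> subst h'
  · exact h
  · have := TP_colsum hy j; have := TP_colsum hF j; linarith

lemma pos_row {s : Fin n} (h0 : 0 < y 0 s) (h1 : 0 < y 1 s) (r : Fin 2) : 0 < y r s := by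
  rcases fin2_cases r with h | h <;> subst h <;> assumption

lemma ext_full (hy : y ∈ TP 2 n u v) (r : Fin 2) (j : Fin n)
    (h : y 0 j = 0 ∨ y 1 j = 0) : y r j = 0 ∨ y r j = v j := by
  have hc := TP_colsum hy j
  rcases fin2_cases r with h' | h' <;> subst h' <;> rcases h with h | h <;>
    first
      | (left; linarith)
      | (right; linarith)

/-- the set of differing columns -/
noncomputable def Dset (F y : Matrix (Fin 2) (Fin n) ℝ) : Finset (Fin n) :=
  Finset.univ.filter (fun j => y 0 j ≠ F 0 j)

lemma Dset_eq_of_off {s : Fin n} (hyV : VertS u v y s) (hF : F ∈ TP 2 n u v)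
    (j : Fin n) (hj : j ∉ Dset F y) (i : Fin 2) : y i j = F i j := by
  have : y 0 j = F 0 j := by
    by_contra h
    exact hj (Finset.mem_filter.mpr ⟨Finset.mem_univ j, h⟩)
  exact row_eq_of_row0 hyV.1 hF j i this

/-- Φ = 0 implies y = F -/
lemma eq_of_phi_zero {s : Fin n} (hyV : VertS u v y s) (hF : F ∈ TP 2 n u v)
    (h : ((Dset F y).erase s).card = 0) : y = F := by
  apply TP_unique hyV.1 hF s
  intro j hj
  by_contra hne
  have hjD : j ∈ (Dset F y).erase s :=
    Finset.mem_erase.mpr ⟨hj, Finset.mem_filter.mpr ⟨Finset.mem_univ j, hne⟩⟩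
  rw [Finset.card_eq_zero.mp h] at hjD
  exact absurd hjD (Finset.notMem_empty j)

/-- conservation of row sums over the difference set -/
lemma sum_Dset (hy : y ∈ TP 2 n u v) (hF : F ∈ TP 2 n u v) (r : Fin 2) :
    ∑ j ∈ Dset F y, (F r j - y r j) = 0 := by
  have h1 : ∑ j ∈ Dset F y, (F r j - y r j) = ∑ j, (F r j - y r j) := by
    apply Finset.sum_subset (Finset.subset_univ _)
    intro x _ hx
    have : y 0 x = F 0 x := by
      by_contra h
      exact hx (Finset.mem_filter.mpr ⟨Finset.mem_univ x, h⟩)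
    rw [row_eq_of_row0 hy hF x r this]; ring
  rw [h1, Finset.sum_sub_distrib, hy.2.1 r, hF.2.1 r, sub_self]

/-- walks -/
def Walk (u : Fin 2 → ℝ) (v : Fin n → ℝ) (y F : Matrix (Fin 2) (Fin n) ℝ) (L : ℕ) : Prop :=
  ∃ w : ℕ → Matrix (Fin 2) (Fin n) ℝ,
    w 0 = y ∧ w L = F ∧ ∀ i < L, AdjVert 2 n u v (w i) (w (i + 1))

lemma walk_refl (F : Matrix (Fin 2) (Fin n) ℝ) : Walk u v F F 0 :=
  ⟨fun _ => F, rfl, rfl, fun i hi => absurd hi (Nat.not_lt_zero i)⟩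

lemma walk_cons {L : ℕ} (h : AdjVert 2 n u v y z) (hw : Walk u v z F L) :
    Walk u v y F (L + 1) := by
  obtain ⟨w, hw0, hwL, hadj⟩ := hw
  refine ⟨fun i => if i = 0 then y else w (i - 1), rfl, by simp [hwL], ?_⟩
  intro i hi
  match i with
  | 0 => simpa [hw0] using h
  | (i + 1) =>
    simp only [Nat.succ_ne_zero, if_false, Nat.add_sub_cancel]
    exact hadj i (by omega)

/-- the combined move lemma -/
lemma move (hn : 0 < n) (hv : ∀ j, 0 < v j) (hnd : NonDeg 2 n u v)
    {s : Fin n} (hyV : VertS u v y s) (c : Fin n) (R : Fin 2)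
    (hcs : c ≠ s) (hfull : y R c = v c) :
    ∃ z s', VertS u v z s' ∧ AdjVert 2 n u v y z ∧
      (∀ i j, j ≠ c → j ≠ s → z i j = y i j) ∧
      ((s' = s ∧ v c < y (1-R) s ∧ z (1-R) c = v c ∧ z R c = 0 ∧
          z R s = y R s + v c ∧ z (1-R) s = y (1-R) s - v c) ∨
       (s' = c ∧ y (1-R) s < v c ∧ z R s = v s ∧ z (1-R) s = 0 ∧
          z (1-R) c = y (1-R) s ∧ z R c = v c - y (1-R) s)) := by
  obtain ⟨z, hzTP, hadj, hoff, hzrc, hzr'c, hzrs, hzr's, hstruct⟩ :=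
    pivot hv hyV.1 s c R hcs hyV.2.1.1 hyV.2.1.2 hyV.2.2 hfull
  have htvc : min (v c) (y (1-R) s) ≤ v c := min_le_left _ _
  have htys : min (v c) (y (1-R) s) ≤ y (1-R) s := min_le_right _ _
  have hposR : 0 < y R s := pos_row hyV.2.1.1 hyV.2.1.2 R
  have hposR' : 0 < y (1-R) s := pos_row hyV.2.1.1 hyV.2.1.2 (1-R)
  rcases hstruct with ⟨ht, hst⟩ | ⟨ht, hst⟩
  · -- t = v c : column c flips, split stays s
    have hzs' : z (1-R) s = y (1-R) s - v c := by rw [hzr's, ht]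
    have hlt : v c < y (1-R) s := by
      rcases lt_or_eq_of_le (show v c ≤ y (1-R) s by rw [← ht]; exact htys) with h | h
      · exact h
      · exfalso
        apply no_all_extreme hn hv hnd hzTP
        intro j
        by_cases hj : j = s
        · subst hj
          exact row_or (1-R) (by rw [hzs', ← h]; ring)
        · exact hst j hj
    have hz0 : ∀ i, 0 < z i s := by
      intro i
      rcases fin2_eq_or i R with hi | hi <;> subst hi
      · rw [hzrs, ht]; linarith [hv c]
      · rw [hzs']; linarith
    refine ⟨z, s, ⟨hzTP, ⟨hz0 0, hz0 1⟩, hst⟩, hadj, hoff,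
      Or.inl ⟨rfl, hlt, ?_, ?_, ?_, ?_⟩⟩
    · rw [hzr'c, ht]
    · rw [hzrc, ht]; ring
    · rw [hzrs, ht]
    · exact hzs'
  · -- t = y (1-R) s : split moves to c
    have hzc' : z R c = v c - y (1-R) s := by rw [hzrc, ht]
    have hlt : y (1-R) s < v c := by
      rcases lt_or_eq_of_le (show y (1-R) s ≤ v c by rw [← ht]; exact htvc) with h | h
      · exact h
      · exfalso
        apply no_all_extreme hn hv hnd hzTP
        intro j
        by_cases hj : j = c
        · subst hj
          exact row_or R (by rw [hzc', h]; ring)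
        · exact hst j hj
    have hzrs2 : z R s = v s := by
      rw [hzrs, ht]; exact TP_colsum' hyV.1 R s
    have hz0 : ∀ i, 0 < z i c := by
      intro i
      rcases fin2_eq_or i R with hi | hi <;> subst hi
      · rw [hzc']; linarith
      · rw [hzr'c, ht]; linarith
    refine ⟨z, c, ⟨hzTP, ⟨hz0 0, hz0 1⟩, hst⟩, hadj, hoff,
      Or.inr ⟨rfl, hlt, hzrs2, ?_, ?_, ?_⟩⟩
    · rw [hzr's, ht]; ring
    · rw [hzr'c, ht]
    · exact hzc'

lemma mem_Dset {j : Fin n} : j ∈ Dset F y ↔ y 0 j ≠ F 0 j := by simp [Dset]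

lemma diff_row (hy : y ∈ TP 2 n u v) (hF : F ∈ TP 2 n u v) {j : Fin n} (r : Fin 2)
    (h : y 0 j ≠ F 0 j) : y r j ≠ F r j :=
  fun he => h (row0_eq_of_row hy hF j r he)

set_option maxHeartbeats 1600000 in
lemma walkG (hn : 0 < n) (hv : ∀ j, 0 < v j) (hnd : NonDeg 2 n u v)
    {f : Fin n} (hFV : VertS u v F f) :
    ∀ N : ℕ, ∀ y s, VertS u v y s →
      (s = f → ∃ r, ∀ c ∈ (Dset F y).erase s, y r c = 0) →
      ((Dset F y).erase s).card ≤ N →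
      ∃ L ≤ ((Dset F y).erase s).card, Walk u v y F L := by
  intro N
  induction N with
  | zero =>
    intro y s hyV _ hN
    exact ⟨0, Nat.zero_le _,
      by rw [eq_of_phi_zero hyV hFV.1 (by omega)]; exact walk_refl F⟩
  | succ N IH =>
    intro y s hyV hINV hN
    by_cases h0 : ((Dset F y).erase s).card = 0
    · exact ⟨0, Nat.zero_le _,
        by rw [eq_of_phi_zero hyV hFV.1 h0]; exact walk_refl F⟩
    by_cases hsf : s = f
    · -- split = f, invariant gives the clean row
      obtain ⟨r, hr⟩ := hINV hsf
      obtain ⟨c0, hc0⟩ := Finset.card_pos.mp (Nat.pos_of_ne_zero h0)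
      have hc0s : c0 ≠ s := (Finset.mem_erase.mp hc0).1
      have hc0D : y 0 c0 ≠ F 0 c0 := mem_Dset.mp (Finset.mem_of_mem_erase hc0)
      have hyrc0 : y r c0 = 0 := hr c0 hc0
      have hFrc0 : F r c0 = v c0 := by
        rcases ext_full hFV.1 r c0 (hFV.2.2 c0 (by rw [← hsf]; exact hc0s)) with h | h
        · exact absurd (row0_eq_of_row hyV.1 hFV.1 c0 r (by rw [hyrc0, h])) hc0D
        · exact h
      have hfull : y (1-r) c0 = v c0 := by
        have := TP_colsum' hyV.1 r c0; linarith
      -- conservation: y r s = F r s + sum of v over D.erase s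
      have hterm : ∀ j ∈ (Dset F y).erase s, F r j - y r j = v j := by
        intro j hj
        have hjs : j ≠ s := (Finset.mem_erase.mp hj).1
        have hjD : y 0 j ≠ F 0 j := mem_Dset.mp (Finset.mem_of_mem_erase hj)
        have hyrj : y r j = 0 := hr j hj
        have : F r j = v j := by
          rcases ext_full hFV.1 r j (hFV.2.2 j (by rw [← hsf]; exact hjs)) with h | h
          · exact absurd (row0_eq_of_row hyV.1 hFV.1 j r (by rw [hyrj, h])) hjD
          · exact h
        rw [hyrj, this]; ring
      have hsum0 := sum_Dset hyV.1 hFV.1 r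
      have hbig : y r s - F r s = ∑ j ∈ (Dset F y).erase s, v j := by
        by_cases hsD : s ∈ Dset F y
        · have e1 := Finset.add_sum_erase (Dset F y) (fun j => F r j - y r j) hsD
          rw [Finset.sum_congr rfl hterm] at e1
          linarith [show F r s - y r s + ∑ j ∈ (Dset F y).erase s, v j
            = ∑ j ∈ Dset F y, (F r j - y r j) from e1, hsum0]
        · have : (Dset F y).erase s = Dset F y := Finset.erase_eq_of_notMem hsD
          rw [this] at hterm ⊢
          rw [Finset.sum_congr rfl hterm] at hsum0
          have hss : y 0 s = F 0 s := by
            by_contra h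
            exact hsD (mem_Dset.mpr h)
          rw [row_eq_of_row0 hyV.1 hFV.1 s r hss]
          linarith [hsum0]
      have hvc0le : v c0 ≤ ∑ j ∈ (Dset F y).erase s, v j :=
        Finset.single_le_sum (fun j _ => le_of_lt (hv j)) hc0
      have hFrs : 0 < F r s := by
        rw [hsf]; exact pos_row hFV.2.1.1 hFV.2.1.2 r
      have hkey : v c0 < y r s := by linarith
      obtain ⟨z, s', hzV, hadj, hoff, hout⟩ := move hn hv hnd hyV c0 (1-r) hc0s hfull
      rw [fin2_onesub_onesub] at hout
      rcases hout with ⟨hs', hlt, hzc, hzc2, hzs1, hzs2⟩ | ⟨hs', hlt, _, _, _, _⟩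
      · rw [hs'] at hzV
        -- c0 flipped to row r fully, matches F
        have hc0out : c0 ∉ Dset F z := by
          rw [mem_Dset, not_not]
          exact row0_eq_of_row hzV.1 hFV.1 c0 r (by rw [hzc, hFrc0])
        have hsub : (Dset F z).erase s ⊆ ((Dset F y).erase s).erase c0 := by
          intro j hj
          obtain ⟨hjs, hjD⟩ := Finset.mem_erase.mp hj
          have hjc0 : j ≠ c0 := fun h => hc0out (h ▸ hjD)
          refine Finset.mem_erase.mpr ⟨hjc0, Finset.mem_erase.mpr ⟨hjs, ?_⟩⟩
          rw [mem_Dset] at hjD ⊢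
          rwa [hoff 0 j hjc0 hjs] at hjD
        have hcard2 : (((Dset F y).erase s).erase c0).card = ((Dset F y).erase s).card - 1 :=
          Finset.card_erase_of_mem hc0
        have hINVz : s = f → ∃ r2, ∀ c ∈ (Dset F z).erase s, z r2 c = 0 := by
          intro _
          refine ⟨r, fun c hc => ?_⟩
          have hc' := hsub hc
          obtain ⟨hcc0, hc''⟩ := Finset.mem_erase.mp hc'
          have hcs : c ≠ s := (Finset.mem_erase.mp hc'').1
          rw [hoff r c hcc0 hcs]
          exact hr c hc''
        obtain ⟨L, hL, hwalk⟩ := IH z s hzV hINVz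
          (by have := Finset.card_le_card hsub; omega)
        exact ⟨L + 1, by have := Finset.card_le_card hsub; omega, walk_cons hadj hwalk⟩
      · exfalso; linarith
    · -- split ≠ f
      have hfs : f ≠ s := fun h => hsf h.symm
      obtain ⟨r, hFrs⟩ : ∃ r, F r s = v s := by
        rcases hFV.2.2 s hfs.symm with h | h
        · exact ⟨1, by have := TP_colsum hFV.1 s; linarith⟩
        · exact ⟨0, by have := TP_colsum hFV.1 s; linarith⟩
      have hyrs_lt : y r s < v s := by
        have := TP_colsum' hyV.1 r s
        have := pos_row hyV.2.1.1 hyV.2.1.2 (1-r)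
        linarith
      have hsD : s ∈ Dset F y := by
        rw [mem_Dset]
        intro h
        have := row_eq_of_row0 hyV.1 hFV.1 s r h
        linarith
      by_cases hb : ∃ c ∈ (Dset F y).erase s, c ≠ f ∧ y r c = v c
      · obtain ⟨c, hcmem, hcf, hcfull⟩ := hb
        have hcs : c ≠ s := (Finset.mem_erase.mp hcmem).1
        have hcD : y 0 c ≠ F 0 c := mem_Dset.mp (Finset.mem_of_mem_erase hcmem)
        have hFrc : F r c = 0 := by
          rcases ext_full hFV.1 r c (hFV.2.2 c hcf) with h | h
          · exact h
          · exact absurd (row0_eq_of_row hyV.1 hFV.1 c r (by rw [hcfull, h])) hcD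
        obtain ⟨z, s', hzV, hadj, hoff, hout⟩ := move hn hv hnd hyV c r hcs hcfull
        have hcard2 : (((Dset F y).erase s).erase c).card = ((Dset F y).erase s).card - 1 :=
          Finset.card_erase_of_mem hcmem
        rcases hout with ⟨hs', hlt, hzc, hzc2, hzs1, hzs2⟩ | ⟨hs', hlt, hzs1, hzs2, hzc, hzc2⟩
        · -- outcome A : c flips, split stays s
          rw [hs'] at hzV
          have hcout : c ∉ Dset F z := by
            rw [mem_Dset, not_not]
            exact row0_eq_of_row hzV.1 hFV.1 c r (by rw [hzc2, hFrc])
          have hsub : (Dset F z).erase s ⊆ ((Dset F y).erase s).erase c := by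
            intro j hj
            obtain ⟨hjs, hjD⟩ := Finset.mem_erase.mp hj
            have hjc : j ≠ c := fun h => hcout (h ▸ hjD)
            refine Finset.mem_erase.mpr ⟨hjc, Finset.mem_erase.mpr ⟨hjs, ?_⟩⟩
            rw [mem_Dset] at hjD ⊢
            rwa [hoff 0 j hjc hjs] at hjD
          obtain ⟨L, hL, hwalk⟩ := IH z s hzV (fun h => absurd h hsf)
            (by have := Finset.card_le_card hsub; omega)
          exact ⟨L + 1, by have := Finset.card_le_card hsub; omega, walk_cons hadj hwalk⟩
        · -- outcome B : split moves to c
          rw [hs'] at hzV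
          have hsout : s ∉ Dset F z := by
            rw [mem_Dset, not_not]
            exact row0_eq_of_row hzV.1 hFV.1 s r (by rw [hzs1, hFrs])
          have hsub : (Dset F z).erase c ⊆ ((Dset F y).erase s).erase c := by
            intro j hj
            obtain ⟨hjc, hjD⟩ := Finset.mem_erase.mp hj
            have hjs : j ≠ s := fun h => hsout (h ▸ hjD)
            refine Finset.mem_erase.mpr ⟨hjc, Finset.mem_erase.mpr ⟨hjs, ?_⟩⟩
            rw [mem_Dset] at hjD ⊢
            rwa [hoff 0 j hjc hjs] at hjD
          obtain ⟨L, hL, hwalk⟩ := IH z c hzV (fun h => absurd h hcf)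
            (by have := Finset.card_le_card hsub; omega)
          exact ⟨L + 1, by have := Finset.card_le_card hsub; omega, walk_cons hadj hwalk⟩
      · -- no ordinary column available: must pivot f itself
        push_neg at hb
        have hzero : ∀ c ∈ (Dset F y).erase s, c ≠ f → y r c = 0 := by
          intro c hc hcf
          rcases ext_full hyV.1 r c (hyV.2.2 c (Finset.mem_erase.mp hc).1) with h | h
          · exact h
          · exact absurd h (hb c hc hcf)
        have htermF : ∀ j ∈ ((Dset F y).erase s).erase f, F r j - y r j = v j := by
          intro j hj
          obtain ⟨hjf, hj'⟩ := Finset.mem_erase.mp hj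
          have hjs : j ≠ s := (Finset.mem_erase.mp hj').1
          have hjD : y 0 j ≠ F 0 j := mem_Dset.mp (Finset.mem_of_mem_erase hj')
          have hyrj : y r j = 0 := hzero j hj' hjf
          have : F r j = v j := by
            rcases ext_full hFV.1 r j (hFV.2.2 j hjf) with h | h
            · exact absurd (row0_eq_of_row hyV.1 hFV.1 j r (by rw [hyrj, h])) hjD
            · exact h
          rw [hyrj, this]; ring
        have hsum0 := sum_Dset hyV.1 hFV.1 r
        have e1 := Finset.add_sum_erase (Dset F y) (fun j => F r j - y r j) hsD
        -- show f ∈ (Dset F y).erase s and y r f = v f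
        have hfmem : f ∈ (Dset F y).erase s ∧ y r f = v f := by
          by_contra hcon
          have hterm' : ∀ j ∈ (Dset F y).erase s, 0 ≤ F r j - y r j := by
            intro j hj
            by_cases hjf : j = f
            · have hmemf : f ∈ (Dset F y).erase s := by rw [← hjf]; exact hj
              have hne : y r f ≠ v f := fun h => hcon ⟨hmemf, h⟩
              have h0f : y r f = 0 := by
                rcases ext_full hyV.1 r f (hyV.2.2 f hfs) with h | h
                · exact h
                · exact absurd h hne
              rw [hjf, h0f]
              have := hFV.1.1 r f
              linarith
            · rw [htermF j (Finset.mem_erase.mpr ⟨hjf, hj⟩)]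
              exact le_of_lt (hv j)
          have hpos : 0 < F r s - y r s := by rw [hFrs]; linarith
          have hsumpos : 0 ≤ ∑ j ∈ (Dset F y).erase s, (F r j - y r j) :=
            Finset.sum_nonneg hterm'
          linarith [hsumpos, hpos, hsum0,
            show F r s - y r s + ∑ j ∈ (Dset F y).erase s, (F r j - y r j)
              = ∑ j ∈ Dset F y, (F r j - y r j) from e1]
        obtain ⟨hfmem1, hffull⟩ := hfmem
        -- key inequality : y (1-r) s < v f
        have e2 := Finset.add_sum_erase ((Dset F y).erase s) (fun j => F r j - y r j) hfmem1
        rw [Finset.sum_congr rfl htermF] at e2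
        have hsumv : 0 ≤ ∑ j ∈ ((Dset F y).erase s).erase f, v j :=
          Finset.sum_nonneg (fun j _ => le_of_lt (hv j))
        have hFrf : 0 < F r f := pos_row hFV.2.1.1 hFV.2.1.2 r
        have hcol_s := TP_colsum' hyV.1 r s
        have hkey : y (1-r) s < v f := by
          linarith [hsum0, hsumv, hFrf, hcol_s, hFrs, hffull,
            show F r s - y r s + ∑ j ∈ (Dset F y).erase s, (F r j - y r j)
              = ∑ j ∈ Dset F y, (F r j - y r j) from e1,
            show F r f - y r f + ∑ j ∈ ((Dset F y).erase s).erase f, v j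
              = ∑ j ∈ (Dset F y).erase s, (F r j - y r j) from e2]
        obtain ⟨z, s', hzV, hadj, hoff, hout⟩ := move hn hv hnd hyV f r hfs hffull
        have hcard2 : (((Dset F y).erase s).erase f).card = ((Dset F y).erase s).card - 1 :=
          Finset.card_erase_of_mem hfmem1
        rcases hout with ⟨hs', hlt, _, _, _, _⟩ | ⟨hs', hlt, hzs1, hzs2, hzc, hzc2⟩
        · exfalso; linarith
        · rw [hs'] at hzV
          have hsout : s ∉ Dset F z := by
            rw [mem_Dset, not_not]
            exact row0_eq_of_row hzV.1 hFV.1 s r (by rw [hzs1, hFrs])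
          have hsub : (Dset F z).erase f ⊆ ((Dset F y).erase s).erase f := by
            intro j hj
            obtain ⟨hjf, hjD⟩ := Finset.mem_erase.mp hj
            have hjs : j ≠ s := fun h => hsout (h ▸ hjD)
            refine Finset.mem_erase.mpr ⟨hjf, Finset.mem_erase.mpr ⟨hjs, ?_⟩⟩
            rw [mem_Dset] at hjD ⊢
            rwa [hoff 0 j hjf hjs] at hjD
          have hINVz : f = f → ∃ r2, ∀ c ∈ (Dset F z).erase f, z r2 c = 0 := by
            intro _
            refine ⟨r, fun c hc => ?_⟩
            have hc' := hsub hc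
            obtain ⟨hcf, hc''⟩ := Finset.mem_erase.mp hc'
            have hcs : c ≠ s := (Finset.mem_erase.mp hc'').1
            rw [hoff r c hcf hcs]
            exact hzero c hc'' hcf
          obtain ⟨L, hL, hwalk⟩ := IH z f hzV hINVz
            (by have := Finset.card_le_card hsub; omega)
          exact ⟨L + 1, by have := Finset.card_le_card hsub; omega, walk_cons hadj hwalk⟩

set_option maxHeartbeats 1600000 in
lemma walkB (hn : 0 < n) (hv : ∀ j, 0 < v j) (hnd : NonDeg 2 n u v)
    {f : Fin n} (hFV : VertS u v F f) (rh : Fin 2) :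
    ∀ N : ℕ, ∀ y s, VertS u v y s → ((Dset F y).erase s).card ≤ N →
      ∃ L, Walk u v y F L ∧
        (L ≤ ((Dset F y).erase s).card ∨
         (L ≤ ((Dset F y).erase s).card + 1 ∧ ∃ zw ∈ TP 2 n u v, zw rh f = 0)) := by
  intro N
  induction N with
  | zero =>
    intro y s hyV hN
    exact ⟨0, by rw [eq_of_phi_zero hyV hFV.1 (by omega)]; exact walk_refl F,
      Or.inl (Nat.zero_le _)⟩
  | succ N IH =>
    intro y s hyV hN
    by_cases hsf : s = f
    · by_cases hex : ∃ c ∈ (Dset F y).erase s, y (1-rh) c = v c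
      · obtain ⟨c, hcmem, hcfull⟩ := hex
        have hcs : c ≠ s := (Finset.mem_erase.mp hcmem).1
        have hcf : c ≠ f := by rw [← hsf]; exact hcs
        have hcD : y 0 c ≠ F 0 c := mem_Dset.mp (Finset.mem_of_mem_erase hcmem)
        have hFc : F rh c = v c := by
          rcases ext_full hFV.1 (1-rh) c (hFV.2.2 c hcf) with h | h
          · have := TP_colsum' hFV.1 (1-rh) c
            rw [fin2_onesub_onesub] at this
            linarith
          · exact absurd (row0_eq_of_row hyV.1 hFV.1 c (1-rh) (by rw [hcfull, h])) hcD
        obtain ⟨z, s', hzV, hadj, hoff, hout⟩ := move hn hv hnd hyV c (1-rh) hcs hcfull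
        rw [fin2_onesub_onesub] at hout
        have hcard2 : (((Dset F y).erase s).erase c).card = ((Dset F y).erase s).card - 1 :=
          Finset.card_erase_of_mem hcmem
        have hpos : 0 < ((Dset F y).erase s).card := Finset.card_pos.mpr ⟨c, hcmem⟩
        rcases hout with ⟨hs', hlt, hzc, hzc2, hzs1, hzs2⟩ | ⟨hs', hlt, hzs1, hzs2, hzc, hzc2⟩
        · -- outcome A : c flips fully to row rh, split stays s ; progress
          rw [hs'] at hzV
          have hcout : c ∉ Dset F z := by
            rw [mem_Dset, not_not]
            exact row0_eq_of_row hzV.1 hFV.1 c rh (by rw [hzc, hFc])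
          have hsub : (Dset F z).erase s ⊆ ((Dset F y).erase s).erase c := by
            intro j hj
            obtain ⟨hjs, hjD⟩ := Finset.mem_erase.mp hj
            have hjc : j ≠ c := fun h => hcout (h ▸ hjD)
            refine Finset.mem_erase.mpr ⟨hjc, Finset.mem_erase.mpr ⟨hjs, ?_⟩⟩
            rw [mem_Dset] at hjD ⊢
            rwa [hoff 0 j hjc hjs] at hjD
          obtain ⟨L, hwalk, hdich⟩ := IH z s hzV
            (by have := Finset.card_le_card hsub; omega)
          refine ⟨L + 1, walk_cons hadj hwalk, ?_⟩
          have hc := Finset.card_le_card hsub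
          rcases hdich with h | ⟨h, hw⟩
          · exact Or.inl (by omega)
          · exact Or.inr ⟨by omega, hw⟩
        · -- outcome B : the waste step ; z rh s = 0 gives the witness
          rw [hs'] at hzV
          have hwit : ∃ zw ∈ TP 2 n u v, zw rh f = 0 := ⟨z, hzV.1, by rw [← hsf]; exact hzs2⟩
          have hsub : (Dset F z).erase c ⊆
              insert s (((Dset F y).erase s).erase c) := by
            intro j hj
            obtain ⟨hjc, hjD⟩ := Finset.mem_erase.mp hj
            by_cases hjs : j = s
            · exact Finset.mem_insert.mpr (Or.inl hjs)
            · refine Finset.mem_insert.mpr (Or.inr (Finset.mem_erase.mpr ⟨hjc,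
                Finset.mem_erase.mpr ⟨hjs, ?_⟩⟩))
              rw [mem_Dset] at hjD ⊢
              rwa [hoff 0 j hjc hjs] at hjD
          obtain ⟨L, hL, hwalk⟩ := walkG hn hv hnd hFV ((Dset F z).erase c).card z c hzV
            (fun h => absurd h hcf) le_rfl
          refine ⟨L + 1, walk_cons hadj hwalk, Or.inr ⟨?_, hwit⟩⟩
          have h1 := Finset.card_le_card hsub
          have h2 := Finset.card_insert_le s (((Dset F y).erase s).erase c)
          omega
      · -- no pivot candidate : the invariant holds with row 1-rh
        push_neg at hex
        have hINV : s = f → ∃ r2, ∀ c ∈ (Dset F y).erase s, y r2 c = 0 := by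
          intro _
          refine ⟨1-rh, fun c hc => ?_⟩
          rcases ext_full hyV.1 (1-rh) c (hyV.2.2 c (Finset.mem_erase.mp hc).1) with h | h
          · exact h
          · exact absurd h (hex c hc)
        obtain ⟨L, hL, hwalk⟩ := walkG hn hv hnd hFV _ y s hyV hINV le_rfl
        exact ⟨L, hwalk, Or.inl hL⟩
    · -- split ≠ f : the clean walk suffices
      obtain ⟨L, hL, hwalk⟩ := walkG hn hv hnd hFV _ y s hyV (fun h => absurd h hsf) le_rfl
      exact ⟨L, hwalk, Or.inl hL⟩

lemma crit_eq : criticalCount 2 n u v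
    = ∑ j, ((if (∀ y ∈ TP 2 n u v, 0 < y 0 j) then 1 else 0)
        + (if (∀ y ∈ TP 2 n u v, 0 < y 1 j) then 1 else 0)) := by
  rw [criticalCount, Finset.card_filter, Fintype.sum_prod_type, Fin.sum_univ_two,
    ← Finset.sum_add_distrib]

set_option maxHeartbeats 800000 in
lemma crit_bound (hv : ∀ j, 0 < v j) {O : Matrix (Fin 2) (Fin n) ℝ} {sO f : Fin n}
    (rh : Fin 2) (hOV : VertS u v O sO) (hFV : VertS u v F f)
    (hrh : f ≠ sO → O (1-rh) f = 0) (W : ℕ) (hW : W ≤ 1)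
    (hwit : W = 1 → ∃ zw ∈ TP 2 n u v, zw rh f = 0) :
    criticalCount 2 n u v + ((Dset F O).erase sO).card + W ≤ n + 1 := by
  classical
  have e0 : (1 : Fin 2) - 0 = 1 := by decide
  have e1 : (1 : Fin 2) - 1 = 0 := by decide
  set A := (Dset F O).erase sO with hA
  set t : Fin n → ℕ := fun j => (if (∀ y ∈ TP 2 n u v, 0 < y 0 j) then 1 else 0)
        + (if (∀ y ∈ TP 2 n u v, 0 < y 1 j) then 1 else 0) with ht
  have hk : criticalCount 2 n u v = ∑ j, t j := crit_eq
  have hnotP : ∀ (i : Fin 2) (j : Fin n) (w : Matrix (Fin 2) (Fin n) ℝ),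
      w ∈ TP 2 n u v → w i j = 0 → ¬ (∀ y ∈ TP 2 n u v, 0 < y i j) := by
    intro i j w hw h hP
    have := hP w hw
    rw [h] at this
    exact lt_irrefl 0 this
  have ht2 : ∀ j, t j ≤ 2 := by intro j; rw [ht]; simp only; split_ifs <;> omega
  have ht1 : ∀ (j : Fin n) (i : Fin 2), ¬ (∀ y ∈ TP 2 n u v, 0 < y i j) → t j ≤ 1 := by
    intro j i hi
    rcases fin2_cases i with h | h <;> subst h <;> rw [ht] <;> simp only <;>
      rw [if_neg hi] <;> split_ifs <;> omega
  have ht0 : ∀ (j : Fin n) (r : Fin 2), ¬ (∀ y ∈ TP 2 n u v, 0 < y r j) →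
      ¬ (∀ y ∈ TP 2 n u v, 0 < y (1-r) j) → t j = 0 := by
    intro j r h1 h2
    rcases fin2_cases r with h | h <;> subst h
    · rw [e0] at h2; rw [ht]; simp only; rw [if_neg h1, if_neg h2]
    · rw [e1] at h2; rw [ht]; simp only; rw [if_neg h2, if_neg h1]
  have hA0 : ∀ j ∈ A, j ≠ f → t j = 0 := by
    intro j hj hjf
    have hjs : j ≠ sO := (Finset.mem_erase.mp hj).1
    have hjD : O 0 j ≠ F 0 j := mem_Dset.mp (Finset.mem_of_mem_erase hj)
    have hkill : ∀ i : Fin 2, O i j = 0 ∨ F i j = 0 := by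
      intro i
      have hd := diff_row hOV.1 hFV.1 i hjD
      rcases ext_full hOV.1 i j (hOV.2.2 j hjs) with h | h
      · exact Or.inl h
      · rcases ext_full hFV.1 i j (hFV.2.2 j hjf) with h' | h'
        · exact Or.inr h'
        · exact absurd (h.trans h'.symm) hd
    refine ht0 j 0 ?_ ?_
    · rcases hkill 0 with h | h
      · exact hnotP 0 j O hOV.1 h
      · exact hnotP 0 j F hFV.1 h
    · rw [e0]
      rcases hkill 1 with h | h
      · exact hnotP 1 j O hOV.1 h
      · exact hnotP 1 j F hFV.1 h
  have hsum_split := Finset.sum_sdiff (f := t) (Finset.subset_univ A)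
  have hsOA : sO ∉ A := Finset.notMem_erase sO _
  have hsOmem : sO ∈ Finset.univ \ A := Finset.mem_sdiff.mpr ⟨Finset.mem_univ sO, hsOA⟩
  have hcardsd : (Finset.univ \ A).card = n - A.card := by
    rw [Finset.card_sdiff_of_subset (Finset.subset_univ A), Finset.card_univ, Fintype.card_fin]
  have hAcard : A.card ≤ n - 1 := by
    have h1 : A ⊆ Finset.univ.erase sO := Finset.erase_subset_erase sO (Finset.subset_univ _)
    have h2 := Finset.card_le_card h1
    rwa [Finset.card_erase_of_mem (Finset.mem_univ sO), Finset.card_univ,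
      Fintype.card_fin] at h2
  have hApos : 1 ≤ n - A.card := by
    have := Finset.card_pos.mpr ⟨sO, hsOmem⟩
    omega
  have hrest : ∀ j ∈ (Finset.univ \ A).erase sO, t j ≤ 1 := by
    intro j hj
    obtain ⟨hjsO, hj'⟩ := Finset.mem_erase.mp hj
    have hjA : j ∉ A := (Finset.mem_sdiff.mp hj').2
    have hjD : O 0 j = F 0 j := by
      by_contra h
      exact hjA (Finset.mem_erase.mpr ⟨hjsO, mem_Dset.mpr h⟩)
    by_cases hjf : j = f
    · exfalso
      subst hjf
      rcases hOV.2.2 j hjsO with h | h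
      · rw [hjD] at h
        linarith [hFV.2.1.1]
      · have hc1 := TP_colsum hOV.1 j
        have hc2 := TP_colsum hFV.1 j
        linarith [hFV.2.1.2]
    · rcases hOV.2.2 j hjsO with h | h
      · exact ht1 j 0 (hnotP 0 j O hOV.1 h)
      · exact ht1 j 1 (hnotP 1 j O hOV.1 h)
  have hsum_rest : ∑ j ∈ (Finset.univ \ A).erase sO, t j ≤ n - A.card - 1 := by
    calc ∑ j ∈ (Finset.univ \ A).erase sO, t j
        ≤ ∑ _j ∈ (Finset.univ \ A).erase sO, 1 := Finset.sum_le_sum hrest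
      _ = ((Finset.univ \ A).erase sO).card := by
          rw [Finset.sum_const, smul_eq_mul, mul_one]
      _ = (Finset.univ \ A).card - 1 := Finset.card_erase_of_mem hsOmem
      _ = n - A.card - 1 := by rw [hcardsd]
  have esd := Finset.add_sum_erase (Finset.univ \ A) t hsOmem
  by_cases hsOf : sO = f
  · have hsumA : ∑ j ∈ A, t j = 0 :=
      Finset.sum_eq_zero (fun j hj => hA0 j hj
        (fun h => (Finset.mem_erase.mp hj).1 (h.trans hsOf.symm)))
    have htsO : t sO + W ≤ 2 := by
      rcases Nat.lt_or_ge W 1 with h | h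
      · have hW0 : W = 0 := by omega
        rw [hW0]
        simpa using ht2 sO
      · have hW1 : W = 1 := by omega
        obtain ⟨zw, hzw, hz0⟩ := hwit hW1
        have := ht1 sO rh (by rw [hsOf]; exact hnotP rh f zw hzw hz0)
        omega
    omega
  · have hfs : f ≠ sO := fun h => hsOf h.symm
    have hfD : O 0 f ≠ F 0 f := by
      rcases hOV.2.2 f hfs with h | h
      · intro he
        rw [h] at he
        linarith [hFV.2.1.1]
      · have hc1 := TP_colsum hOV.1 f
        have hc2 := TP_colsum hFV.1 f
        intro he
        linarith [hFV.2.1.2]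
    have hfA : f ∈ A := Finset.mem_erase.mpr ⟨hfs, mem_Dset.mpr hfD⟩
    have esA := Finset.add_sum_erase A t hfA
    have hsumAe : ∑ j ∈ A.erase f, t j = 0 :=
      Finset.sum_eq_zero (fun j hj =>
        hA0 j (Finset.mem_of_mem_erase hj) (Finset.mem_erase.mp hj).1)
    have htf : t f + W ≤ 1 := by
      have h1 : ¬ (∀ y ∈ TP 2 n u v, 0 < y (1-rh) f) := hnotP (1-rh) f O hOV.1 (hrh hfs)
      rcases Nat.lt_or_ge W 1 with h | h
      · have hW0 : W = 0 := by omega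
        rw [hW0]
        simpa using ht1 f (1-rh) h1
      · have hW1 : W = 1 := by omega
        obtain ⟨zw, hzw, hz0⟩ := hwit hW1
        have h2 : ¬ (∀ y ∈ TP 2 n u v, 0 < y rh f) := hnotP rh f zw hzw hz0
        have := ht0 f rh h2 h1
        omega
    have htsO : t sO ≤ 1 := by
      rcases hFV.2.2 sO hsOf with h | h
      · exact ht1 sO 0 (hnotP 0 sO F hFV.1 h)
      · exact ht1 sO 1 (hnotP 1 sO F hFV.1 h)
    omega
end S11

theorem stmt_11 (n : ℕ) (hn : 0 < n) (u : Fin 2 → ℝ) (v : Fin n → ℝ)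
    (hu : ∀ i, 0 < u i) (hv : ∀ j, 0 < v j) (huv : ∑ i, u i = ∑ j, v j)
    (hnd : NonDeg 2 n u v)
    (O F : Matrix (Fin 2) (Fin n) ℝ)
    (hO : O ∈ Set.extremePoints ℝ (TP 2 n u v))
    (hF : F ∈ Set.extremePoints ℝ (TP 2 n u v)) :
    ∃ k ≤ min n (n + 1 - criticalCount 2 n u v), ∃ w : ℕ → Matrix (Fin 2) (Fin n) ℝ,
      w 0 = O ∧ w k = F ∧ ∀ i < k, AdjVert 2 n u v (w i) (w (i + 1)) := by
  classical
  obtain ⟨sO, hOV⟩ := S11.vert_of_extreme hn hv hnd hO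
  obtain ⟨f, hFV⟩ := S11.vert_of_extreme hn hv hnd hF
  set rh : Fin 2 := if O 0 f = 0 then 1 else 0 with hrh
  have hrhk : f ≠ sO → O (1-rh) f = 0 := by
    intro hfs
    by_cases h : O 0 f = 0
    · have : rh = 1 := by rw [hrh, if_pos h]
      rw [this]
      simpa using h
    · rcases hOV.2.2 f hfs with h' | h'
      · exact absurd h' h
      · have : rh = 0 := by rw [hrh, if_neg h]
        rw [this]
        simpa using h'
  obtain ⟨L, hwalk, hdich⟩ := S11.walkB hn hv hnd hFV rh
    (((S11.Dset F O).erase sO).card) O sO hOV le_rfl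
  have hPhi : ((S11.Dset F O).erase sO).card ≤ n - 1 := by
    have h1 : (S11.Dset F O).erase sO ⊆ Finset.univ.erase sO :=
      Finset.erase_subset_erase sO (Finset.subset_univ _)
    have h2 := Finset.card_le_card h1
    rwa [Finset.card_erase_of_mem (Finset.mem_univ sO), Finset.card_univ,
      Fintype.card_fin] at h2
  have hbound : L ≤ min n (n + 1 - criticalCount 2 n u v) := by
    rcases hdich with h | ⟨h, hwit⟩
    · have hc := S11.crit_bound hv rh hOV hFV hrhk 0 (by omega)
        (fun h => absurd h (by norm_num))
      refine le_min (by omega) (by omega)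
    · have hc := S11.crit_bound hv rh hOV hFV hrhk 1 le_rfl (fun _ => hwit)
      refine le_min (by omega) (by omega)
  obtain ⟨w, hw0, hwL, hadj⟩ := hwalk
  exact ⟨L, hbound, w, hw0, hwL, hadj⟩
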